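/- Consider two DAGs G and G' with the same skeleton whose topological orderings differ only by altering the position of one node z (with x preceding y in both). If z ∉ rch(G,x,y) ∪ forb(G,x,y) ∪ pa_G(forb(G,x,y)), then forb(G,x,y) = forb(G',x,y). -/

import Mathlib

/-- Adjacency in the skeleton of a digraph given by edge relation `G`. -/
def skelAdj {V : Type*} (G : V → V → Prop) (a b : V) : Prop := G a b ∨ G b a

/-- A digraph is acyclic (a DAG) if it has no directed cycle. -/
def IsAcyclicDigraph {V : Type*} (G : V → V → Prop) : Prop :=
  ∀ v, ¬ Relation.TransGen G v v

/-- A path: a list of distinct vertices in which consecutive vertices are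
joined by an edge (of either orientation). -/
def IsPath {V : Type*} (G : V → V → Prop) (p : List V) : Prop :=
  p.Nodup ∧ p.Chain' (skelAdj G)

/-- A path between `x` and `y` (written from `x` to `y`). -/
def IsPathBetween {V : Type*} (G : V → V → Prop) (x y : V) (p : List V) : Prop :=
  IsPath G p ∧ p.head? = some x ∧ p.getLast? = some y

/-- A directed (causal) path from `x` to `y`: every edge points towards `y`. -/
def IsDirPath {V : Type*} (G : V → V → Prop) (x y : V) (p : List V) : Prop :=
  p.Nodup ∧ p.Chain' G ∧ p.head? = some x ∧ p.getLast? = some y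

/-- `w` is a collider on the path `p`: both edges of `p` at `w` point into `w`. -/
def IsCollider {V : Type*} (G : V → V → Prop) (p : List V) (w : V) : Prop :=
  ∃ a b, [a, w, b] <:+: p ∧ G a w ∧ G b w

/-- Descendants of a vertex (including the vertex itself). -/
def descendants {V : Type*} (G : V → V → Prop) (v : V) : Set V :=
  {w | Relation.ReflTransGen G v w}

/-- Ancestors of a vertex (including the vertex itself). -/
def ancestors {V : Type*} (G : V → V → Prop) (v : V) : Set V :=
  {w | Relation.ReflTransGen G w v}

/-- Parents of a vertex. -/
def parents {V : Type*} (G : V → V → Prop) (v : V) : Set V := {w | G w v}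

/-- Descendants of a set of vertices. -/
def descendantsSet {V : Type*} (G : V → V → Prop) (W : Set V) : Set V :=
  ⋃ v ∈ W, descendants G v

/-- Ancestors of a set of vertices. -/
def ancestorsSet {V : Type*} (G : V → V → Prop) (W : Set V) : Set V :=
  ⋃ v ∈ W, ancestors G v

/-- Parents of a set of vertices. -/
def parentsSet {V : Type*} (G : V → V → Prop) (W : Set V) : Set V :=
  ⋃ v ∈ W, parents G v

/-- A path `p` is blocked by a vertex set `A`: it contains a non-collider in `A`,
or a collider `c` with `descendants G c ∩ A = ∅`. -/
def Blocked {V : Type*} (G : V → V → Prop) (A : Set V) (p : List V) : Prop :=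
  (∃ w ∈ p, ¬ IsCollider G p w ∧ w ∈ A) ∨
    (∃ c, IsCollider G p c ∧ descendants G c ∩ A = ∅)

/-- `cn G x y`: vertices `z ≠ x` lying on some directed path from `x` to `y`. -/
def cn {V : Type*} (G : V → V → Prop) (x y : V) : Set V :=
  {z | z ≠ x ∧ ∃ p, IsDirPath G x y p ∧ z ∈ p}

/-- The forbidden set `forb G x y = de(cn(G,x,y)) ∪ {x}`. -/
def forb {V : Type*} (G : V → V → Prop) (x y : V) : Set V :=
  descendantsSet G (cn G x y) ∪ {x}

/-- `A ⊆ V \ {x,y}` is a valid adjustment set in `G`: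
(i) `A ∩ forb(G,x,y) = ∅`, and (ii) every non-causal path from `x` to `y` is
blocked by `A`. -/
def IsValidAdjustment {V : Type*} (G : V → V → Prop) (x y : V) (A : Set V) : Prop :=
  x ∉ A ∧ y ∉ A ∧ A ∩ forb G x y = ∅ ∧
    ∀ p, IsPathBetween G x y p → ¬ p.Chain' G → Blocked G A p

/-- `rch G x y`: vertices lying on some path between `x` and `y` in the skeleton. -/
def rch {V : Type*} (G : V → V → Prop) (x y : V) : Set V :=
  {z | ∃ p, IsPathBetween G x y p ∧ z ∈ p}

/-- Induced subgraph of `G` on a vertex set `S`. -/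
def induce {V : Type*} (G : V → V → Prop) (S : Set V) : V → V → Prop :=
  fun a b => G a b ∧ a ∈ S ∧ b ∈ S

/-- `clr G x y`: all colliders on any path from `x` to `y` in the induced
subgraph of `G` on `rch G x y`. -/
def clr {V : Type*} (G : V → V → Prop) (x y : V) : Set V :=
  {c | ∃ p, IsPathBetween (induce G (rch G x y)) x y p ∧
      IsCollider (induce G (rch G x y)) p c}

/-- The optimal adjustment set `opadj G x y = pa(cn(G,x,y)) \ forb(G,x,y)`. -/
def opadj {V : Type*} (G : V → V → Prop) (x y : V) : Set V :=
  parentsSet G (cn G x y) \ forb G x y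

/-- `G^{pd}_{xy}`: `G` with every edge from `x` to a child of `x` that is an
ancestor of `y` removed. -/
def pdGraph {V : Type*} (G : V → V → Prop) (x y : V) : V → V → Prop :=
  fun a b => G a b ∧ ¬ (a = x ∧ b ∈ ancestors G y)

/-- `τ` is a topological ordering of `G`. -/
def IsTopOrder {V : Type*} (G : V → V → Prop) (τ : V → ℕ) : Prop :=
  Function.Injective τ ∧ ∀ a b, G a b → τ a < τ b

/-- `G'` is obtained from `G` by altering the position of the single node `z`
in a topological ordering of `G` (keeping the skeleton and the orientation of
all edges not incident to `z`, and reorienting edges incident to `z` according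
to the new ordering), with `x` preceding `y` in both orderings. -/
def AlterOne {V : Type*} (G G' : V → V → Prop) (z x y : V) : Prop :=
  ∃ τ τ' : V → ℕ,
    IsTopOrder G τ ∧ IsTopOrder G' τ' ∧
    τ x < τ y ∧ τ' x < τ' y ∧
    (∀ a b, a ≠ z → b ≠ z → (τ a < τ b ↔ τ' a < τ' b)) ∧
    (∀ a b, a ≠ z → b ≠ z → (G a b ↔ G' a b)) ∧
    (∀ a b, a = z ∨ b = z → (G' a b ↔ (skelAdj G a b ∧ τ' a < τ' b)))

lemma chain'_iff_of_nodup {V : Type*} {R S : V → V → Prop}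
    (h : ∀ a b, a ≠ b → (R a b ↔ S a b)) :
    ∀ {p : List V}, p.Nodup → (p.Chain' R ↔ p.Chain' S) := by
  intro p
  induction p with
  | nil => simp [List.Chain']
  | cons a l ih =>
    cases l with
    | nil => simp [List.Chain']
    | cons b t =>
      intro hn
      obtain ⟨ha, hrest⟩ := List.nodup_cons.mp hn
      have hab : a ≠ b := fun e => ha (e ▸ List.mem_cons_self (a := b) (l := t))
      unfold List.Chain'
      rw [List.isChain_cons_cons, List.isChain_cons_cons, h a b hab]
      exact and_congr Iff.rfl (ih hrest)

lemma chain'_iff_of_mem {V : Type*} {R S : V → V → Prop} :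
    ∀ (p : List V), (∀ a b, a ∈ p → b ∈ p → (R a b ↔ S a b)) →
      (p.Chain' R ↔ p.Chain' S) := by
  intro p
  induction p with
  | nil => simp [List.Chain']
  | cons a l ih =>
    cases l with
    | nil => simp [List.Chain']
    | cons b t =>
      intro h
      unfold List.Chain'
      rw [List.isChain_cons_cons, List.isChain_cons_cons,
        h a b List.mem_cons_self (List.mem_cons_of_mem a (List.mem_cons_self (a := b) (l := t)))]
      exact and_congr Iff.rfl
        (ih (fun u v hu hv => h u v (List.mem_cons_of_mem a hu) (List.mem_cons_of_mem a hv)))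

/-- Corollary, part 2. -/
theorem statement3 {V : Type*} (G G' : V → V → Prop) (z x y : V)
    (halt : AlterOne G G' z x y)
    (hz : z ∉ rch G x y ∪ forb G x y ∪ parentsSet G (forb G x y)) :
    forb G x y = forb G' x y := by
  obtain ⟨τ, τ', hτ, hτ', hxy, hxy', hord, hfix, hzedge⟩ := halt
  simp only [Set.mem_union, not_or] at hz
  obtain ⟨⟨hzrch, hzforb⟩, hzpa⟩ := hz
  have hzx : z ≠ x := fun h => hzforb (Or.inr (by rw [h]; rfl))
  -- skeletons agree on distinct pairs
  have hskel : ∀ a b : V, a ≠ b → (skelAdj G a b ↔ skelAdj G' a b) := by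
    intro a b hab
    by_cases hks : a = z ∨ b = z
    · have h1 := hzedge a b hks
      have h2 := hzedge b a hks.symm
      have hne : τ' a ≠ τ' b := fun h => hab (hτ'.1 h)
      constructor
      · intro h
        rcases lt_or_gt_of_ne hne with hl | hl
        · exact Or.inl (h1.2 ⟨h, hl⟩)
        · exact Or.inr (h2.2 ⟨h.symm, hl⟩)
      · intro h
        rcases h with h | h
        · exact (h1.1 h).1
        · exact ((h2.1 h).1).symm
    · push_neg at hks
      simp only [skelAdj, hfix a b hks.1 hks.2, hfix b a hks.2 hks.1]
  -- paths between x and y coincide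
  have hpb : ∀ p : List V, IsPathBetween G x y p ↔ IsPathBetween G' x y p := by
    intro p
    constructor
    · rintro ⟨⟨hn, hc⟩, h2, h3⟩
      exact ⟨⟨hn, (chain'_iff_of_nodup hskel hn).mp hc⟩, h2, h3⟩
    · rintro ⟨⟨hn, hc⟩, h2, h3⟩
      exact ⟨⟨hn, (chain'_iff_of_nodup hskel hn).mpr hc⟩, h2, h3⟩
  have hrch : rch G x y = rch G' x y := by
    ext w
    unfold rch
    simp only [Set.mem_setOf_eq, hpb]
  -- z lies on no directed path from x to y in G nor in G'
  have hdirnotz : ∀ p, IsDirPath G x y p → z ∉ p := by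
    rintro p ⟨hn, hc, h2, h3⟩ hzp
    exact hzrch ⟨p, ⟨⟨hn, hc.imp (fun _ _ h => Or.inl h)⟩, h2, h3⟩, hzp⟩
  have hdirnotz' : ∀ p, IsDirPath G' x y p → z ∉ p := by
    rintro p ⟨hn, hc, h2, h3⟩ hzp
    have : z ∈ rch G' x y := ⟨p, ⟨⟨hn, hc.imp (fun _ _ h => Or.inl h)⟩, h2, h3⟩, hzp⟩
    rw [← hrch] at this
    exact hzrch this
  -- directed paths coincide
  have hdirIff : ∀ p, IsDirPath G x y p ↔ IsDirPath G' x y p := by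
    intro p
    constructor
    · rintro hp
      have hzp := hdirnotz p hp
      obtain ⟨hn, hc, h2, h3⟩ := hp
      refine ⟨hn, ?_, h2, h3⟩
      exact (chain'_iff_of_mem p (fun a b ha hb =>
        hfix a b (fun e => hzp (e ▸ ha)) (fun e => hzp (e ▸ hb)))).mp hc
    · rintro hp
      have hzp := hdirnotz' p hp
      obtain ⟨hn, hc, h2, h3⟩ := hp
      refine ⟨hn, ?_, h2, h3⟩
      exact (chain'_iff_of_mem p (fun a b ha hb =>
        hfix a b (fun e => hzp (e ▸ ha)) (fun e => hzp (e ▸ hb)))).mpr hc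
  have hcn : cn G x y = cn G' x y := by
    ext w
    unfold cn
    simp only [Set.mem_setOf_eq, hdirIff]
  -- descendants of causal nodes are contained in forb G
  have hsub : ∀ v ∈ cn G x y, descendants G v ⊆ forb G x y := by
    intro v hv w hw
    exact Or.inl (Set.mem_biUnion hv hw)
  -- descendants of causal nodes coincide
  have hdesc : ∀ v ∈ cn G x y, descendants G v = descendants G' v := by
    intro v hv
    ext w
    constructor
    · intro hw
      induction hw with
      | refl => exact Relation.ReflTransGen.refl
      | @tail b c hb hbc ih =>
        have hbz : b ≠ z := fun h => hzforb (h ▸ hsub v hv hb)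
        have hcz : c ≠ z := fun h => hzforb (h ▸ hsub v hv (hb.tail hbc))
        exact ih.tail ((hfix b c hbz hcz).mp hbc)
    · intro hw
      induction hw with
      | refl => exact Relation.ReflTransGen.refl
      | @tail b c hb hbc ih =>
        have hbz : b ≠ z := fun h => hzforb (h ▸ hsub v hv ih)
        by_cases hcz : c = z
        · rw [hcz] at hbc
          rcases ((hzedge b z (Or.inr rfl)).mp hbc).1 with hgz | hgz
          · exact absurd (hsub v hv (ih.tail hgz)) hzforb
          · exact absurd (Set.mem_biUnion (hsub v hv ih) hgz) hzpa
        · exact ih.tail ((hfix b c hbz hcz).mpr hbc)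
  unfold forb descendantsSet
  rw [← hcn]
  congr 1
  exact Set.iUnion₂_congr hdesc
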